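/- Let A be a ring with a descending filtration Fil^• and let t ∈ Fil¹A be such that multiplication by t is injective and shifts the filtration: t·Fil^r ⊂ Fil^{r+1} with Fil^{r+1} ∩ tA = t·Fil^r. Define B := A[1/t] with Fil^r B := ∪_{n≥0} t^{−n} Fil^{r+n} A. Then Fil^• B is a decreasing, exhaustive filtration on B, multiplication by t induces an isomorphism Fil^r B → Fil^{r+1} B, and Fil^r B ∩ A = Fil^r A for all r ≥ 0. -/

import Mathlib

/-- Let `A` be a ring with a decreasing filtration `Fil` (indexed by `ℤ`, with
`Fil r = A` for `r ≤ 0`) and `t ∈ Fil 1` a regular element shifting the filtration strictly: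
`Fil (r+1) ∩ tA = t·Fil r`.  On `B := A[1/t]` define
`Fil^r B := ∪_n t^{-n} Fil^{r+n} A`.  Then `Fil^• B` is a decreasing exhaustive filtration,
multiplication by `t` carries `Fil^r B` onto `Fil^{r+1} B`, and `Fil^r B ∩ A = Fil^r A`
for all `r ≥ 0`. -/
theorem stmt_17 (A : Type*) [CommRing A]
    (Fil : ℤ → Ideal A) (hFil0 : ∀ r : ℤ, r ≤ 0 → Fil r = ⊤)
    (hanti : ∀ r : ℤ, Fil (r + 1) ≤ Fil r)
    (t : A) (ht1 : t ∈ Fil 1)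
    (hreg : ∀ a b : A, t * a = t * b → a = b)
    (hshift : ∀ r : ℤ, ∀ a ∈ Fil r, t * a ∈ Fil (r + 1))
    (hstrict : ∀ r : ℤ, Fil (r + 1) ⊓ Ideal.span {t} = Ideal.span {t} * Fil r)
    (B : Type*) [CommRing B] [Algebra A B] [IsLocalization.Away t B]
    (FilB : ℤ → Set B)
    (hFilB : ∀ r : ℤ, FilB r = {x : B | ∃ n : ℕ, ∃ a : A,
      a ∈ Fil (r + n) ∧ algebraMap A B a = algebraMap A B t ^ n * x}) :
    (∀ r : ℤ, FilB (r + 1) ⊆ FilB r) ∧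
    (∀ x : B, ∃ r : ℤ, x ∈ FilB r) ∧
    (∀ r : ℤ, (fun x : B => algebraMap A B t * x) '' FilB r = FilB (r + 1)) ∧
    (∀ r : ℤ, 0 ≤ r → {a : A | algebraMap A B a ∈ FilB r} = ↑(Fil r)) := by
  have htreg : t ∈ nonZeroDivisors A := by
    refine mem_nonZeroDivisors_iff_right.mpr fun x hx => ?_
    have := hreg x 0 (by rw [mul_comm] at hx; simpa using hx)
    simpa using this
  have hpow : Submonoid.powers t ≤ nonZeroDivisors A := by
    rintro x ⟨n, rfl⟩
    exact pow_mem htreg n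
  have hinj : Function.Injective (algebraMap A B) :=
    IsLocalization.injective B hpow
  have htunit : IsUnit (algebraMap A B t) :=
    IsLocalization.map_units B ⟨t, Submonoid.mem_powers t⟩
  -- key: t^n * a ∈ Fil (r + n) → a ∈ Fil r
  have key : ∀ (n : ℕ) (r : ℤ) (a : A), t ^ n * a ∈ Fil (r + n) → a ∈ Fil r := by
    intro n
    induction n with
    | zero => intro r a ha; simpa using ha
    | succ n ih =>
      intro r a ha
      have h1 : t * (t ^ n * a) ∈ Fil (r + n + 1) ⊓ Ideal.span {t} := by
        refine ⟨?_, Ideal.mem_span_singleton.mpr ⟨t ^ n * a, rfl⟩⟩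
        have he : t * (t ^ n * a) = t ^ (n + 1) * a := by ring
        have he2 : (r : ℤ) + n + 1 = r + ((n + 1 : ℕ) : ℤ) := by push_cast; ring
        rw [he, he2]; exact ha
      rw [hstrict (r + n)] at h1
      rw [Ideal.mem_span_singleton_mul] at h1
      obtain ⟨c, hc, hct⟩ := h1
      have : t ^ n * a = c := hreg _ _ hct.symm
      exact ih r a (this ▸ hc)
  refine ⟨?_, ?_, ?_, ?_⟩
  · -- decreasing
    intro r x hx
    rw [hFilB] at hx ⊢
    obtain ⟨n, a, ha, heq⟩ := hx
    exact ⟨n, a, hanti (r + n) (by convert ha using 2; ring), heq⟩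
  · -- exhaustive
    intro x
    obtain ⟨⟨a, s⟩, hs⟩ := IsLocalization.surj (Submonoid.powers t) x
    obtain ⟨n, hn⟩ := s.2
    refine ⟨-n, ?_⟩
    rw [hFilB]
    refine ⟨n, a, ?_, ?_⟩
    · rw [hFil0 _ (by simp)]; trivial
    · rw [← hs]
      simp only [← hn]
      push_cast [mul_comm]
      rfl
  · -- shift by t
    intro r
    ext y
    constructor
    · rintro ⟨x, hx, rfl⟩
      rw [hFilB] at hx ⊢
      obtain ⟨n, a, ha, heq⟩ := hx
      refine ⟨n, t * a, ?_, ?_⟩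
      · have := hshift (r + n) a ha
        convert this using 2; ring
      · rw [map_mul, heq]; ring
    · intro hy
      rw [hFilB] at hy
      obtain ⟨n, a, ha, heq⟩ := hy
      refine ⟨↑htunit.unit⁻¹ * y, ?_, ?_⟩
      · rw [hFilB]
        refine ⟨n + 1, a, ?_, ?_⟩
        · convert ha using 2; push_cast; ring
        · rw [heq]
          have hcancel : algebraMap A B t * ↑htunit.unit⁻¹ = 1 := by
            exact htunit.mul_val_inv
          have : algebraMap A B t ^ (n + 1) * (↑htunit.unit⁻¹ * y)
              = algebraMap A B t ^ n * (algebraMap A B t * ↑htunit.unit⁻¹) * y := by ring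
          rw [this, hcancel, mul_one]
      · have hcancel : algebraMap A B t * ↑htunit.unit⁻¹ = 1 := by
          exact htunit.mul_val_inv
        show algebraMap A B t * (↑htunit.unit⁻¹ * y) = y
        rw [← mul_assoc, hcancel, one_mul]
  · -- Fil B ∩ A = Fil A
    intro r hr
    ext a
    simp only [Set.mem_setOf_eq, SetLike.mem_coe]
    constructor
    · intro ha
      rw [hFilB] at ha
      obtain ⟨n, b, hb, heq⟩ := ha
      have : b = t ^ n * a := by
        apply hinj
        rw [heq, map_mul, map_pow]
      exact key n r a (this ▸ hb)
    · intro ha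
      rw [hFilB]
      exact ⟨0, a, by simpa using ha, by simp⟩
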